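/- For all x, y > 0, ∫_0^∞ K²_z g(x,y) μ_{α₂}(dz) = (δ(δ+1)Γ(α₂+δ)/(Γ(α₂)Γ(δ+2))) x^{βδ} y^{−δ−α₂} − (ρ(1−ρ)Γ(α₂−ρ)/(Γ(α₂)Γ(2−ρ))) y^{ρ−α₂}. -/

import Mathlib

open MeasureTheory Set Real Filter

lemma betaIoo {a b : ℝ} (ha : 0 < a) (hb : 0 < b) :
    ∫ x in Ioo (0:ℝ) 1, x ^ (a-1) * (1-x) ^ (b-1) = Gamma a * Gamma b / Gamma (a+b) := by
  have hG : Complex.Gamma a * Complex.Gamma b = Complex.Gamma (a+b) * Complex.betaIntegral a b := by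
    have := Complex.Gamma_mul_Gamma_eq_betaIntegral (s := (a:ℂ)) (t := (b:ℂ))
      (by simpa using ha) (by simpa using hb)
    simpa using this
  have hbeta : Complex.betaIntegral a b
      = ((∫ x in (0:ℝ)..1, x ^ (a-1) * (1-x) ^ (b-1) : ℝ) : ℂ) := by
    rw [Complex.betaIntegral, ← intervalIntegral.integral_ofReal]
    refine intervalIntegral.integral_congr fun t ht => ?_
    rw [uIcc_of_le (by norm_num)] at ht
    rw [Complex.ofReal_mul, Complex.ofReal_cpow ht.1, Complex.ofReal_cpow (by linarith [ht.2])]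
    push_cast
    ring
  have hR : Gamma a * Gamma b
      = Gamma (a+b) * ∫ x in (0:ℝ)..1, x ^ (a-1) * (1-x) ^ (b-1) := by
    have h2 := hG
    rw [hbeta, ← Complex.ofReal_add, Complex.Gamma_ofReal, Complex.Gamma_ofReal,
      Complex.Gamma_ofReal] at h2
    exact_mod_cast h2
  have hGpos : 0 < Gamma (a+b) := Real.Gamma_pos_of_pos (by linarith)
  have heq : ∫ x in Ioo (0:ℝ) 1, x ^ (a-1) * (1-x) ^ (b-1)
      = ∫ x in (0:ℝ)..1, x ^ (a-1) * (1-x) ^ (b-1) := by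
    rw [intervalIntegral.integral_of_le zero_le_one, integral_Ioc_eq_integral_Ioo]
  rw [heq, eq_div_iff hGpos.ne']
  linarith [hR]

lemma betaIoi {a b : ℝ} (ha : 0 < a) (hb : 0 < b) :
    ∫ t in Ioi (0:ℝ), t ^ (a-1) * (1+t) ^ (-a-b) = Gamma a * Gamma b / Gamma (a+b) := by
  have himg : (fun t : ℝ => t / (1 - t)) '' Ioo 0 1 = Ioi 0 := by
    ext z; constructor
    · rintro ⟨t, ⟨ht0, ht1⟩, rfl⟩
      exact div_pos ht0 (by linarith)
    · intro hz
      have hz' : (0:ℝ) < z := hz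
      refine ⟨z/(1+z), ⟨div_pos hz' (by linarith), (div_lt_one (by linarith)).2 (by linarith)⟩, ?_⟩
      have h1z : (1:ℝ) + z ≠ 0 := by positivity
      field_simp
      ring
  have hderiv : ∀ t ∈ Ioo (0:ℝ) 1, HasDerivWithinAt (fun t : ℝ => t / (1 - t))
      (1/(1-t)^2) (Ioo 0 1) t := by
    intro t ht
    have hu : (1:ℝ) - t ≠ 0 := by have := ht.2; intro h; simp [sub_eq_zero] at h; linarith
    have h := (hasDerivAt_id t).div ((hasDerivAt_id t).const_sub 1) hu
    simp only [id] at h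
    refine h.hasDerivWithinAt.congr_deriv ?_
    ring
  have hinj : InjOn (fun t : ℝ => t / (1 - t)) (Ioo 0 1) := by
    intro p hp q hq h
    simp only at h
    rw [div_eq_div_iff (by linarith [hp.2]) (by linarith [hq.2])] at h
    ring_nf at h
    linarith
  have := integral_image_eq_integral_abs_deriv_smul measurableSet_Ioo hderiv hinj
    (fun z => z ^ (a-1) * (1+z) ^ (-a-b))
  rw [himg] at this
  rw [this, ← betaIoo ha hb]
  refine setIntegral_congr_fun measurableSet_Ioo fun t ht => ?_
  obtain ⟨ht0, ht1⟩ := ht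
  have hu : (0:ℝ) < 1 - t := by linarith
  have h1 : 1 + t/(1-t) = (1-t)⁻¹ := by field_simp; ring
  rw [smul_eq_mul, h1, Real.div_rpow ht0.le hu.le, Real.inv_rpow hu.le,
    abs_of_pos (by positivity), ← Real.rpow_neg hu.le,
    show -(-a-b) = a + b by ring]
  rw [show ((1-t)^2 : ℝ) = (1-t)^(2:ℝ) by rw [← Real.rpow_natCast]; norm_num,
    one_div, ← Real.rpow_neg hu.le, div_eq_mul_inv, ← Real.rpow_neg hu.le]
  have hcomb : ((1-t):ℝ)^(-(2:ℝ)) * ((1-t)^(-(a-1)) * (1-t)^(a+b)) = (1-t)^(b-1) := by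
    rw [← Real.rpow_add hu, ← Real.rpow_add hu]
    congr 1; ring
  linear_combination t^(a-1) * hcomb

lemma betaIoi_scaled {a b y : ℝ} (ha : 0 < a) (hb : 0 < b) (hy : 0 < y) :
    ∫ t in Ioi (0:ℝ), t ^ (a-1) * (y+t) ^ (-a-b)
      = y ^ (-b) * (Gamma a * Gamma b / Gamma (a+b)) := by
  have h := integral_comp_mul_left_Ioi (fun t : ℝ => t^(a-1)*(y+t)^(-a-b)) 0 hy
  simp only [mul_zero, smul_eq_mul] at h
  have h2 : ∫ x in Ioi (0:ℝ), (y*x)^(a-1)*(y+y*x)^(-a-b)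
      = (y^(a-1) * y^(-a-b)) * ∫ x in Ioi (0:ℝ), x^(a-1)*(1+x)^(-a-b) := by
    rw [← MeasureTheory.integral_const_mul]
    refine setIntegral_congr_fun measurableSet_Ioi fun x hx => ?_
    have hx' : (0:ℝ) < x := hx
    rw [show y + y*x = y * (1+x) by ring, Real.mul_rpow hy.le hx'.le,
      Real.mul_rpow hy.le (by linarith)]
    ring
  rw [h2, betaIoi ha hb] at h
  have hyne : y ≠ 0 := hy.ne'
  have hpow : y * (y^(a-1) * y^(-a-b)) = y^(-b) := by
    nth_rewrite 1 [show y = y^(1:ℝ) by simp]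
    rw [← Real.rpow_add hy, ← Real.rpow_add hy]
    congr 1; ring
  rw [eq_comm, inv_mul_eq_iff_eq_mul₀ hyne] at h
  rw [h, ← mul_assoc, mul_comm y, mul_assoc, ← mul_assoc]
  rw [← hpow]; ring

lemma rpow_base_anti {x x' e : ℝ} (hx : 0 < x) (hxx : x ≤ x') (he : e ≤ 0) :
    x' ^ e ≤ x ^ e := by
  rw [← neg_neg e, Real.rpow_neg (by linarith), Real.rpow_neg hx.le]
  exact inv_anti₀ (Real.rpow_pos_of_pos hx _)
    (Real.rpow_le_rpow hx.le hxx (by linarith))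

lemma intOn_helper {f : ℝ → ℝ} (hm : ContinuousOn f (Ioi 0)) {C1 C2 p q : ℝ}
    (hp : -1 < p) (hq : q < -1)
    (h0 : ∀ z : ℝ, 0 < z → z ≤ 1 → |f z| ≤ C1 * z ^ p)
    (h1 : ∀ z : ℝ, 1 ≤ z → |f z| ≤ C2 * z ^ q) :
    IntegrableOn f (Ioi (0:ℝ)) := by
  have hu : Ioc (0:ℝ) 1 ∪ Ioi 1 = Ioi 0 := Ioc_union_Ioi_eq_Ioi zero_le_one
  rw [← hu]
  apply IntegrableOn.union
  · have hg : IntegrableOn (fun z : ℝ => C1 * z ^ p) (Ioc (0:ℝ) 1) := by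
      have := (intervalIntegral.intervalIntegrable_rpow' (a := 0) (b := 1) hp)
      rw [intervalIntegrable_iff_integrableOn_Ioc_of_le zero_le_one] at this
      exact this.const_mul C1
    refine Integrable.mono' hg ((hm.mono Ioc_subset_Ioi_self).aestronglyMeasurable
      measurableSet_Ioc) ?_
    filter_upwards [ae_restrict_mem measurableSet_Ioc] with z hz
    rw [Real.norm_eq_abs]; exact h0 z hz.1 hz.2
  · have hg : IntegrableOn (fun z : ℝ => C2 * z ^ q) (Ioi (1:ℝ)) :=
      (integrableOn_Ioi_rpow_of_lt hq one_pos).const_mul C2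
    refine Integrable.mono' hg ((hm.mono (Ioi_subset_Ioi zero_le_one)).aestronglyMeasurable
      measurableSet_Ioi) ?_
    filter_upwards [ae_restrict_mem measurableSet_Ioi] with z hz
    rw [Real.norm_eq_abs]; exact h1 z (le_of_lt hz)

lemma rpow_le_one_add {x s : ℝ} (hx : 0 ≤ x) (hs : s ≤ 1) (hs0 : 0 ≤ s) :
    x ^ s ≤ 1 + x := by
  rcases le_total x 1 with h | h
  · exact le_add_of_le_of_nonneg (Real.rpow_le_one hx h hs0) hx
  · calc x ^ s ≤ x ^ (1:ℝ) := Real.rpow_le_rpow_of_exponent_le h hs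
    _ = x := Real.rpow_one x
    _ ≤ 1 + x := by linarith

lemma kernel {α s y : ℝ} (hα1 : 1 < α) (hα2 : α < 2) (hs : s < 1) (hy : 0 < y) :
    IntegrableOn (fun z => ((y+z)^s - y^s - s*y^(s-1)*z) * z^(-1-α)) (Ioi 0) ∧
    ∫ z in Ioi (0:ℝ), ((y+z)^s - y^s - s*y^(s-1)*z) * z^(-1-α)
      = s*(s-1)*(Gamma (2-α) * Gamma (α-s) / Gamma (2-s)) / (α*(α-1)) * y^(s-α) := by
  have hyz : ∀ z : ℝ, 0 < z → (0:ℝ) < y + z := fun z hz => by linarith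
  set C2 : ℝ := |s*(s-1)| * y^(s-2) with hC2
  have hC2nn : 0 ≤ C2 := mul_nonneg (abs_nonneg _) (Real.rpow_pos_of_pos hy _).le
  -- pointwise derivative helpers
  have hpow : ∀ (t : ℝ) (p : ℝ), 0 < y + t →
      HasDerivAt (fun w : ℝ => (y+w)^p) (p*(y+t)^(p-1)) t := by
    intro t p hyt
    have h0 : HasDerivAt (fun w : ℝ => y + w) 1 t := (hasDerivAt_id t).const_add y
    have h := (Real.hasDerivAt_rpow_const (x := y+t) (p := p) (Or.inl hyt.ne')).comp t h0
    simp only [mul_one] at h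
    exact h
  -- Taylor identity of order 2
  have htay2 : ∀ z : ℝ, 0 < z → (y+z)^s - y^s - s*y^(s-1)*z
      = ∫ t in (0:ℝ)..z, (z-t) * (s*(s-1)*(y+t)^(s-2)) := by
    intro z hz
    have hyt : ∀ t ∈ uIcc (0:ℝ) z, (0:ℝ) < y + t := by
      intro t ht
      rw [uIcc_of_le hz.le] at ht
      have := ht.1; linarith
    have hG : ∀ t ∈ uIcc (0:ℝ) z, HasDerivAt
        (fun t : ℝ => (z-t)*(s*(y+t)^(s-1)) + (y+t)^s)
        ((z-t) * (s*(s-1)*(y+t)^(s-2))) t := by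
      intro t ht
      have hyt' := hyt t ht
      have h1 := hpow t (s-1) hyt'
      have h2 := hpow t s hyt'
      have h3 : HasDerivAt (fun t : ℝ => z - t) (-1) t := (hasDerivAt_id t).const_sub z
      have h4 := (h3.mul (h1.const_mul s)).add h2
      rw [show s-1-1 = s-2 by ring] at h4
      refine h4.congr_deriv ?_
      ring
    have hint : IntervalIntegrable (fun t : ℝ => (z-t) * (s*(s-1)*(y+t)^(s-2))) volume 0 z := by
      apply ContinuousOn.intervalIntegrable
      exact ((continuous_const.sub continuous_id).continuousOn).mul
        (continuousOn_const.mul (ContinuousOn.rpow_const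
          ((continuous_const.add continuous_id).continuousOn) (fun t ht => Or.inl (hyt t ht).ne')))
    rw [intervalIntegral.integral_eq_sub_of_hasDerivAt hG hint]
    simp
    ring
  -- Taylor identity of order 1
  have htay1 : ∀ z : ℝ, 0 < z → s*((y+z)^(s-1) - y^(s-1))
      = ∫ t in (0:ℝ)..z, s*(s-1)*(y+t)^(s-2) := by
    intro z hz
    have hyt : ∀ t ∈ uIcc (0:ℝ) z, (0:ℝ) < y + t := by
      intro t ht
      rw [uIcc_of_le hz.le] at ht
      have := ht.1; linarith
    have hG : ∀ t ∈ uIcc (0:ℝ) z, HasDerivAt (fun t : ℝ => s*(y+t)^(s-1))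
        (s*(s-1)*(y+t)^(s-2)) t := by
      intro t ht
      have h1 := (hpow t (s-1) (hyt t ht)).const_mul s
      rw [show s-1-1 = s-2 by ring] at h1
      refine h1.congr_deriv ?_
      ring
    have hint : IntervalIntegrable (fun t : ℝ => s*(s-1)*(y+t)^(s-2)) volume 0 z := by
      apply ContinuousOn.intervalIntegrable
      exact continuousOn_const.mul (ContinuousOn.rpow_const
        ((continuous_const.add continuous_id).continuousOn) (fun t ht => Or.inl (hyt t ht).ne'))
    rw [intervalIntegral.integral_eq_sub_of_hasDerivAt hG hint]
    simp
    ring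
  -- bound on (y+t)^(s-2)
  have hb2 : ∀ t : ℝ, 0 ≤ t → (y+t)^(s-2) ≤ y^(s-2) := by
    intro t ht
    exact rpow_base_anti hy (by linarith) (by linarith)
  -- second order bound
  have hbF : ∀ z : ℝ, 0 < z → |(y+z)^s - y^s - s*y^(s-1)*z| ≤ C2 * z^2 := by
    intro z hz
    rw [htay2 z hz]
    have := intervalIntegral.norm_integral_le_of_norm_le_const
      (C := z * C2) (f := fun t => (z-t) * (s*(s-1)*(y+t)^(s-2))) (a := 0) (b := z) ?_
    · rw [Real.norm_eq_abs] at this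
      calc |∫ t in (0:ℝ)..z, (z-t) * (s*(s-1)*(y+t)^(s-2))| ≤ z * C2 * |z - 0| := this
        _ = C2 * z^2 := by rw [abs_of_pos (by linarith)]; ring
    · intro t ht
      rw [uIoc_of_le hz.le] at ht
      rw [Real.norm_eq_abs, abs_mul, abs_mul, abs_mul]
      have h1 : |z - t| ≤ z := by rw [abs_of_nonneg (by linarith [ht.2])]; linarith [ht.1]
      have h2 : |(y+t)^(s-2)| ≤ y^(s-2) := by
        rw [abs_of_pos (Real.rpow_pos_of_pos (by linarith [ht.1] : (0:ℝ) < y + t) _)]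
        exact hb2 t ht.1.le
      calc |z - t| * (|s| * |s-1| * |(y+t)^(s-2)|)
          ≤ z * (|s| * |s-1| * y^(s-2)) := by
            apply mul_le_mul h1 _ (by positivity) hz.le
            apply mul_le_mul_of_nonneg_left h2 (by positivity)
        _ = z * C2 := by rw [hC2, abs_mul]
  -- first order bound
  have hbF1 : ∀ z : ℝ, 0 < z → |s*((y+z)^(s-1) - y^(s-1))| ≤ C2 * z := by
    intro z hz
    rw [htay1 z hz]
    have := intervalIntegral.norm_integral_le_of_norm_le_const
      (C := C2) (f := fun t => s*(s-1)*(y+t)^(s-2)) (a := 0) (b := z) ?_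
    · rw [Real.norm_eq_abs] at this
      rw [sub_zero, abs_of_pos hz] at this
      exact this
    · intro t ht
      rw [uIoc_of_le hz.le] at ht
      rw [Real.norm_eq_abs, abs_mul, abs_mul]
      have h2 : |(y+t)^(s-2)| ≤ y^(s-2) := by
        rw [abs_of_pos (Real.rpow_pos_of_pos (by linarith [ht.1] : (0:ℝ) < y + t) _)]
        exact hb2 t ht.1.le
      calc |s| * |s-1| * |(y+t)^(s-2)| ≤ |s| * |s-1| * y^(s-2) := by
            apply mul_le_mul_of_nonneg_left h2 (by positivity)
        _ = C2 := by rw [hC2, abs_mul]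
  -- large-z bounds
  set K : ℝ := 2 + y + 2*y^s + |s| * y^(s-1) with hK
  have hKpos : 0 < K := by
    have := abs_nonneg s
    have h1 : (0:ℝ) < y^s := Real.rpow_pos_of_pos hy _
    have h2 : (0:ℝ) ≤ |s| * y^(s-1) := mul_nonneg (abs_nonneg s) (Real.rpow_pos_of_pos hy _).le
    nlinarith
  have hbFK : ∀ z : ℝ, 1 ≤ z → |(y+z)^s - y^s - s*y^(s-1)*z| ≤ K * z := by
    intro z hz
    have hz0 : (0:ℝ) < z := by linarith
    have hys : (0:ℝ) < y^s := Real.rpow_pos_of_pos hy _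
    have hys1 : (0:ℝ) ≤ |s| * y^(s-1) := mul_nonneg (abs_nonneg s) (Real.rpow_pos_of_pos hy _).le
    have hmain : (y+z)^s ≤ (2 + y + y^s) * z := by
      rcases le_total s 0 with hsneg | hspos
      · calc (y+z)^s ≤ y^s := rpow_base_anti hy (by linarith) hsneg
          _ ≤ y^s * z := le_mul_of_one_le_right hys.le hz
          _ ≤ (2 + y + y^s) * z := by nlinarith
      · calc (y+z)^s ≤ 1 + (y+z) := rpow_le_one_add (by linarith) hs.le hspos
          _ ≤ (2 + y) * z := by nlinarith
          _ ≤ (2 + y + y^s) * z := by nlinarith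
    have h2 : |(y+z)^s - y^s - s*y^(s-1)*z| ≤ (y+z)^s + y^s + |s| * y^(s-1)*z := by
      have ha : (0:ℝ) < (y+z)^s := Real.rpow_pos_of_pos (by linarith) _
      have hb : |s*y^(s-1)*z| = |s| * y^(s-1)*z := by
        rw [abs_mul, abs_mul, abs_of_pos (Real.rpow_pos_of_pos hy _), abs_of_pos hz0]
      calc |(y+z)^s - y^s - s*y^(s-1)*z| ≤ |(y+z)^s - y^s| + |s*y^(s-1)*z| := abs_sub _ _
        _ ≤ (|(y+z)^s| + |y^s|) + |s*y^(s-1)*z| := by linarith [abs_sub_abs_le_abs_sub ((y+z)^s) (y^s), abs_sub ((y+z)^s) (y^s)]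
        _ = (y+z)^s + y^s + |s| * y^(s-1)*z := by rw [hb, abs_of_pos ha, abs_of_pos hys]
    calc |(y+z)^s - y^s - s*y^(s-1)*z| ≤ (y+z)^s + y^s + |s| * y^(s-1)*z := h2
      _ ≤ (2 + y + y^s)*z + y^s*z + (|s| * y^(s-1))*z := by
          have : y^s ≤ y^s * z := le_mul_of_one_le_right hys.le hz
          nlinarith
      _ = K * z := by rw [hK]; ring
  have hbF1K : ∀ z : ℝ, 0 < z → |s*((y+z)^(s-1) - y^(s-1))| ≤ 2*|s| * y^(s-1) := by
    intro z hz
    have h1 : (0:ℝ) < (y+z)^(s-1) := Real.rpow_pos_of_pos (by linarith) _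
    have h2 : (y+z)^(s-1) ≤ y^(s-1) := rpow_base_anti hy (by linarith) (by linarith)
    rw [abs_mul]
    have : |(y+z)^(s-1) - y^(s-1)| ≤ 2 * y^(s-1) := by
      rw [abs_le]
      constructor <;> nlinarith [Real.rpow_pos_of_pos hy (s-1)]
    nlinarith [abs_nonneg s]
  -- continuity facts
  have hcontP : ∀ p : ℝ, ContinuousOn (fun z : ℝ => z ^ p) (Ioi 0) := fun p =>
    ContinuousOn.rpow_const continuousOn_id (fun z hz => Or.inl (ne_of_gt hz))
  have hcontYP : ∀ p : ℝ, ContinuousOn (fun z : ℝ => (y+z) ^ p) (Ioi 0) := fun p =>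
    ContinuousOn.rpow_const ((continuous_const.add continuous_id).continuousOn)
      (fun z hz => Or.inl (hyz z hz).ne')
  have hcontF : ContinuousOn (fun z : ℝ => (y+z)^s - y^s - s*y^(s-1)*z) (Ioi 0) :=
    ((hcontYP s).sub continuousOn_const).sub (continuous_const.mul continuous_id).continuousOn
  have hcontF1 : ContinuousOn (fun z : ℝ => s*((y+z)^(s-1) - y^(s-1))) (Ioi 0) :=
    continuousOn_const.mul ((hcontYP (s-1)).sub continuousOn_const)
  -- integrabilities
  have i1 : IntegrableOn (fun z : ℝ => ((y+z)^s - y^s - s*y^(s-1)*z) * z^(-1-α)) (Ioi 0) := by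
    apply intOn_helper (hcontF.mul (hcontP (-1-α))) (C1 := C2) (C2 := K)
      (p := 1-α) (q := -α) (by linarith) (by linarith)
    · intro z hz hz1
      simp only [Pi.mul_apply]
      rw [abs_mul, abs_of_pos (Real.rpow_pos_of_pos hz _)]
      calc |(y+z)^s - y^s - s*y^(s-1)*z| * z^(-1-α) ≤ (C2 * z^2) * z^(-1-α) :=
            mul_le_mul_of_nonneg_right (hbF z hz) (Real.rpow_pos_of_pos hz _).le
        _ = C2 * z^(1-α) := by
            rw [mul_assoc]; congr 1
            rw [← Real.rpow_natCast z 2, ← Real.rpow_add hz]; congr 1; push_cast; ring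
    · intro z hz
      have hz0 : (0:ℝ) < z := by linarith
      simp only [Pi.mul_apply]
      rw [abs_mul, abs_of_pos (Real.rpow_pos_of_pos hz0 _)]
      calc |(y+z)^s - y^s - s*y^(s-1)*z| * z^(-1-α) ≤ (K * z) * z^(-1-α) :=
            mul_le_mul_of_nonneg_right (hbFK z hz) (Real.rpow_pos_of_pos hz0 _).le
        _ = K * z^(-α) := by
            rw [mul_assoc]; congr 1
            rw [show -α = 1 + (-1-α) by ring, Real.rpow_add hz0, Real.rpow_one]
  have i2 : IntegrableOn (fun z : ℝ => (s*((y+z)^(s-1) - y^(s-1))) * z^(-α)) (Ioi 0) := by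
    apply intOn_helper (hcontF1.mul (hcontP (-α))) (C1 := C2) (C2 := 2*|s| * y^(s-1))
      (p := 1-α) (q := -α) (by linarith) (by linarith)
    · intro z hz hz1
      simp only [Pi.mul_apply]
      rw [abs_mul, abs_of_pos (Real.rpow_pos_of_pos hz _)]
      calc |s*((y+z)^(s-1) - y^(s-1))| * z^(-α) ≤ (C2 * z) * z^(-α) :=
            mul_le_mul_of_nonneg_right (hbF1 z hz) (Real.rpow_pos_of_pos hz _).le
        _ = C2 * z^(1-α) := by
            rw [mul_assoc]; congr 1
            rw [show (1:ℝ)-α = 1 + (-α) by ring, Real.rpow_add hz, Real.rpow_one]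
    · intro z hz
      have hz0 : (0:ℝ) < z := by linarith
      simp only [Pi.mul_apply]
      rw [abs_mul, abs_of_pos (Real.rpow_pos_of_pos hz0 _)]
      exact mul_le_mul_of_nonneg_right (hbF1K z hz0) (Real.rpow_pos_of_pos hz0 _).le
  have i3 : IntegrableOn (fun z : ℝ => (s*(s-1)*(y+z)^(s-2)) * z^(1-α)) (Ioi 0) := by
    apply intOn_helper ((continuousOn_const.mul (hcontYP (s-2))).mul (hcontP (1-α)))
      (C1 := C2) (C2 := |s*(s-1)|) (p := 1-α) (q := s-1-α) (by linarith) (by linarith)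
    · intro z hz hz1
      simp only [Pi.mul_apply]
      rw [abs_mul, abs_of_pos (Real.rpow_pos_of_pos hz _), abs_mul,
        abs_of_pos (Real.rpow_pos_of_pos (hyz z hz) _)]
      have := hb2 z hz.le
      rw [hC2]
      apply mul_le_mul_of_nonneg_right _ (Real.rpow_pos_of_pos hz _).le
      exact mul_le_mul_of_nonneg_left this (abs_nonneg _)
    · intro z hz
      have hz0 : (0:ℝ) < z := by linarith
      simp only [Pi.mul_apply]
      rw [abs_mul, abs_of_pos (Real.rpow_pos_of_pos hz0 _), abs_mul,
        abs_of_pos (Real.rpow_pos_of_pos (hyz z hz0) _)]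
      have h1 : (y+z)^(s-2) ≤ z^(s-2) := rpow_base_anti hz0 (by linarith) (by linarith)
      calc |s*(s-1)| * (y+z)^(s-2) * z^(1-α) ≤ |s*(s-1)| * z^(s-2) * z^(1-α) := by
            apply mul_le_mul_of_nonneg_right _ (Real.rpow_pos_of_pos hz0 _).le
            exact mul_le_mul_of_nonneg_left h1 (abs_nonneg _)
        _ = |s*(s-1)| * z^(s-1-α) := by
            rw [mul_assoc]; congr 1
            rw [← Real.rpow_add hz0]; congr 1; ring
  -- derivatives for FTC
  have hd1 : ∀ z ∈ Ioi (0:ℝ), HasDerivAt (fun w : ℝ => ((y+w)^s - y^s - s*y^(s-1)*w) * w^(-α))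
      ((s*((y+z)^(s-1) - y^(s-1))) * z^(-α)
        + (-α) * (((y+z)^s - y^s - s*y^(s-1)*z) * z^(-1-α))) z := by
    intro z hz
    have hz0 : (0:ℝ) < z := hz
    have hFd : HasDerivAt (fun w : ℝ => (y+w)^s - y^s - s*y^(s-1)*w)
        (s*((y+z)^(s-1) - y^(s-1))) z := by
      have h1 := hpow z s (hyz z hz0)
      have h3 : HasDerivAt (fun w : ℝ => s*y^(s-1)*w) (s*y^(s-1)) z := by
        simpa using (hasDerivAt_id z).const_mul (s*y^(s-1))
      have h4 := (h1.sub_const (y^s)).sub h3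
      refine h4.congr_deriv ?_; ring
    have hr : HasDerivAt (fun w : ℝ => w^(-α)) (-α * z^(-α-1)) z :=
      Real.hasDerivAt_rpow_const (Or.inl hz0.ne')
    have h := hFd.mul hr
    rw [show -α-1 = -1-α by ring] at h
    refine h.congr_deriv ?_; ring
  have hd2 : ∀ z ∈ Ioi (0:ℝ), HasDerivAt (fun w : ℝ => (s*((y+w)^(s-1) - y^(s-1))) * w^(1-α))
      ((s*(s-1)*(y+z)^(s-2)) * z^(1-α)
        + (1-α) * ((s*((y+z)^(s-1) - y^(s-1))) * z^(-α))) z := by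
    intro z hz
    have hz0 : (0:ℝ) < z := hz
    have hF1d : HasDerivAt (fun w : ℝ => s*((y+w)^(s-1) - y^(s-1))) (s*(s-1)*(y+z)^(s-2)) z := by
      have h1 := ((hpow z (s-1) (hyz z hz0)).sub_const (y^(s-1))).const_mul s
      rw [show s-1-1 = s-2 by ring] at h1
      refine h1.congr_deriv ?_; ring
    have hr : HasDerivAt (fun w : ℝ => w^(1-α)) ((1-α) * z^(1-α-1)) z :=
      Real.hasDerivAt_rpow_const (Or.inl hz0.ne')
    have h := hF1d.mul hr
    rw [show 1-α-1 = -α by ring] at h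
    refine h.congr_deriv ?_; ring
  -- continuity at 0
  have hcw1 : ContinuousWithinAt
      (fun w : ℝ => ((y+w)^s - y^s - s*y^(s-1)*w) * w^(-α)) (Ici 0) 0 := by
    have hf0 : (fun w : ℝ => ((y+w)^s - y^s - s*y^(s-1)*w) * w^(-α)) 0 = 0 := by simp
    show Filter.Tendsto _ (nhdsWithin 0 (Ici 0)) _
    rw [hf0]
    have hb : Filter.Tendsto (fun z : ℝ => C2 * z^((2:ℝ)-α)) (nhdsWithin 0 (Ici 0)) (nhds 0) := by
      have h0 : Filter.Tendsto (fun z : ℝ => z^((2:ℝ)-α)) (nhdsWithin (0:ℝ) (Ici 0)) (nhds 0) := by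
        apply Filter.Tendsto.mono_left _ nhdsWithin_le_nhds
        have := (Real.continuousAt_rpow_const 0 ((2:ℝ)-α) (Or.inr (by linarith))).tendsto
        simpa [Real.zero_rpow (show ((2:ℝ)-α) ≠ 0 from ne_of_gt (by linarith))] using this
      simpa using h0.const_mul C2
    apply squeeze_zero_norm' _ hb
    filter_upwards [self_mem_nhdsWithin] with z hz
    rcases eq_or_lt_of_le (show (0:ℝ) ≤ z from hz) with rfl | hz0
    · simp [Real.zero_rpow (show ((2:ℝ)-α) ≠ 0 from ne_of_gt (by linarith))]
    · rw [Real.norm_eq_abs, abs_mul, abs_of_pos (Real.rpow_pos_of_pos hz0 _)]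
      calc |(y+z)^s - y^s - s*y^(s-1)*z| * z^(-α) ≤ (C2 * z^2) * z^(-α) :=
            mul_le_mul_of_nonneg_right (hbF z hz0) (Real.rpow_pos_of_pos hz0 _).le
        _ = C2 * z^((2:ℝ)-α) := by
            rw [mul_assoc]; congr 1
            rw [← Real.rpow_natCast z 2, ← Real.rpow_add hz0]
            norm_num
            rw [show (2:ℝ) + -α = 2 - α from by ring]
  have hcw2 : ContinuousWithinAt
      (fun w : ℝ => (s*((y+w)^(s-1) - y^(s-1))) * w^(1-α)) (Ici 0) 0 := by
    have hf0 : (fun w : ℝ => (s*((y+w)^(s-1) - y^(s-1))) * w^(1-α)) 0 = 0 := by simp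
    show Filter.Tendsto _ (nhdsWithin 0 (Ici 0)) _
    rw [hf0]
    have hb : Filter.Tendsto (fun z : ℝ => C2 * z^((2:ℝ)-α)) (nhdsWithin 0 (Ici 0)) (nhds 0) := by
      have h0 : Filter.Tendsto (fun z : ℝ => z^((2:ℝ)-α)) (nhdsWithin (0:ℝ) (Ici 0)) (nhds 0) := by
        apply Filter.Tendsto.mono_left _ nhdsWithin_le_nhds
        have := (Real.continuousAt_rpow_const 0 ((2:ℝ)-α) (Or.inr (by linarith))).tendsto
        simpa [Real.zero_rpow (show ((2:ℝ)-α) ≠ 0 from ne_of_gt (by linarith))] using this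
      simpa using h0.const_mul C2
    apply squeeze_zero_norm' _ hb
    filter_upwards [self_mem_nhdsWithin] with z hz
    rcases eq_or_lt_of_le (show (0:ℝ) ≤ z from hz) with rfl | hz0
    · simp [Real.zero_rpow (show ((2:ℝ)-α) ≠ 0 from ne_of_gt (by linarith))]
    · rw [Real.norm_eq_abs, abs_mul, abs_of_pos (Real.rpow_pos_of_pos hz0 _)]
      calc |s*((y+z)^(s-1) - y^(s-1))| * z^(1-α) ≤ (C2 * z) * z^(1-α) :=
            mul_le_mul_of_nonneg_right (hbF1 z hz0) (Real.rpow_pos_of_pos hz0 _).le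
        _ = C2 * z^((2:ℝ)-α) := by
            rw [mul_assoc]; congr 1
            rw [show ((2:ℝ)-α) = 1 + (1-α) by ring, Real.rpow_add hz0, Real.rpow_one]
  -- limits at infinity
  have ht1 : Filter.Tendsto (fun z : ℝ => ((y+z)^s - y^s - s*y^(s-1)*z) * z^(-α))
      Filter.atTop (nhds 0) := by
    have hb : Filter.Tendsto (fun z : ℝ => K * z^(-(α-1))) Filter.atTop (nhds 0) := by
      simpa using (tendsto_rpow_neg_atTop (by linarith : (0:ℝ) < α-1)).const_mul K
    apply squeeze_zero_norm' _ hb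
    filter_upwards [Filter.eventually_ge_atTop (1:ℝ)] with z hz
    have hz0 : (0:ℝ) < z := by linarith
    rw [Real.norm_eq_abs, abs_mul, abs_of_pos (Real.rpow_pos_of_pos hz0 _)]
    calc |(y+z)^s - y^s - s*y^(s-1)*z| * z^(-α) ≤ (K * z) * z^(-α) :=
          mul_le_mul_of_nonneg_right (hbFK z hz) (Real.rpow_pos_of_pos hz0 _).le
      _ = K * z^(-(α-1)) := by
          rw [mul_assoc]; congr 1
          rw [show -(α-1) = 1 + (-α) by ring, Real.rpow_add hz0, Real.rpow_one]
  have ht2 : Filter.Tendsto (fun z : ℝ => (s*((y+z)^(s-1) - y^(s-1))) * z^(1-α))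
      Filter.atTop (nhds 0) := by
    have hb : Filter.Tendsto (fun z : ℝ => (2*|s| * y^(s-1)) * z^(-(α-1)))
        Filter.atTop (nhds 0) := by
      simpa using (tendsto_rpow_neg_atTop (by linarith : (0:ℝ) < α-1)).const_mul (2*|s| * y^(s-1))
    apply squeeze_zero_norm' _ hb
    filter_upwards [Filter.eventually_ge_atTop (1:ℝ)] with z hz
    have hz0 : (0:ℝ) < z := by linarith
    rw [Real.norm_eq_abs, abs_mul, abs_of_pos (Real.rpow_pos_of_pos hz0 _),
      show (1:ℝ)-α = -(α-1) by ring]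
    exact mul_le_mul_of_nonneg_right (hbF1K z hz0) (Real.rpow_pos_of_pos hz0 _).le
  -- FTC on Ioi 0
  have E1 : (∫ z in Ioi (0:ℝ), (s*((y+z)^(s-1) - y^(s-1))) * z^(-α))
      + (-α) * ∫ z in Ioi (0:ℝ), ((y+z)^s - y^s - s*y^(s-1)*z) * z^(-1-α) = 0 := by
    have h := integral_Ioi_of_hasDerivAt_of_tendsto hcw1 hd1 (i2.add (i1.const_mul (-α))) ht1
    rw [integral_add i2 (i1.const_mul (-α)), integral_const_mul] at h
    rw [h]
    simp
  have E2 : (∫ z in Ioi (0:ℝ), (s*(s-1)*(y+z)^(s-2)) * z^(1-α))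
      + (1-α) * ∫ z in Ioi (0:ℝ), (s*((y+z)^(s-1) - y^(s-1))) * z^(-α) = 0 := by
    have h := integral_Ioi_of_hasDerivAt_of_tendsto hcw2 hd2 (i3.add (i2.const_mul (1-α))) ht2
    rw [integral_add i3 (i2.const_mul (1-α)), integral_const_mul] at h
    rw [h]
    simp
  -- evaluate the beta-type integral
  have hbeta : ∫ t in Ioi (0:ℝ), t^(1-α) * (y+t)^(s-2)
      = y^(s-α) * (Gamma (2-α) * Gamma (α-s) / Gamma (2-s)) := by
    have h := betaIoi_scaled (a := 2-α) (b := α-s) (by linarith) (by linarith) hy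
    rw [show (2-α)-1 = 1-α by ring, show -(2-α)-(α-s) = s-2 by ring,
      show -(α-s) = s-α by ring, show (2-α)+(α-s) = 2-s by ring] at h
    exact h
  have hC : ∫ z in Ioi (0:ℝ), (s*(s-1)*(y+z)^(s-2)) * z^(1-α)
      = s*(s-1)*(y^(s-α) * (Gamma (2-α) * Gamma (α-s) / Gamma (2-s))) := by
    rw [← hbeta, ← integral_const_mul]
    refine setIntegral_congr_fun measurableSet_Ioi fun z hz => ?_
    ring
  refine ⟨i1, ?_⟩
  rw [hC] at E2
  have hne : α*(α-1) ≠ 0 := by nlinarith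
  have hBA : (∫ z in Ioi (0:ℝ), (s*((y+z)^(s-1) - y^(s-1))) * z^(-α))
      = α * ∫ z in Ioi (0:ℝ), ((y+z)^s - y^s - s*y^(s-1)*z) * z^(-1-α) := by linarith
  rw [hBA] at E2
  have hA : (∫ z in Ioi (0:ℝ), ((y+z)^s - y^s - s*y^(s-1)*z) * z^(-1-α))
      = (s*(s-1)*(y^(s-α) * (Gamma (2-α) * Gamma (α-s) / Gamma (2-s)))) / (α*(α-1)) := by
    rw [eq_div_iff hne]
    linear_combination -E2
  rw [hA]
  ring

/-- Lemma 3.10, identity (3.34): for `g(x,y) = x^{βδ} y^{−δ} + y^ρ` and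
`K²_z g(x,y) = g(x,y+z) − g(x,y) − ∂_y g(x,y) z`, for all `x, y > 0`,
`∫_0^∞ K²_z g(x,y) μ_{α₂}(dz)
  = (δ(δ+1)Γ(α₂+δ)/(Γ(α₂)Γ(δ+2))) x^{βδ} y^{−δ−α₂}
      − (ρ(1−ρ)Γ(α₂−ρ)/(Γ(α₂)Γ(2−ρ))) y^{ρ−α₂}`. -/
theorem K2_integral_eq (α₂ β δ ρ : ℝ) (hα₁ : 1 < α₂) (hα₂ : α₂ < 2)
    (hβ : 0 < β) (hδ₀ : 0 < δ) (hδ : δ < 1 / β) (hρ₀ : 0 < ρ) (hρ : ρ < 1)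
    (x y : ℝ) (hx : 0 < x) (hy : 0 < y) :
    ∫ z in Ioi (0 : ℝ),
        (x ^ (β * δ) * (y + z) ^ (-δ) + (y + z) ^ ρ - (x ^ (β * δ) * y ^ (-δ) + y ^ ρ)
            - deriv (fun y' : ℝ => x ^ (β * δ) * y' ^ (-δ) + y' ^ ρ) y * z) *
          (α₂ * (α₂ - 1) / (Real.Gamma α₂ * Real.Gamma (2 - α₂)) * z ^ (-1 - α₂))
      = δ * (δ + 1) * Real.Gamma (α₂ + δ) / (Real.Gamma α₂ * Real.Gamma (δ + 2))
            * x ^ (β * δ) * y ^ (-δ - α₂)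
          - ρ * (1 - ρ) * Real.Gamma (α₂ - ρ) / (Real.Gamma α₂ * Real.Gamma (2 - ρ))
            * y ^ (ρ - α₂) := by
  have hy0 : y ≠ 0 := hy.ne'
  set A := x ^ (β * δ) with hA
  set c := α₂ * (α₂ - 1) / (Gamma α₂ * Gamma (2 - α₂)) with hc
  have hD : deriv (fun y' : ℝ => A * y' ^ (-δ) + y' ^ ρ) y
      = A * (-δ * y^(-δ-1)) + ρ * y^(ρ-1) := by
    apply HasDerivAt.deriv
    exact ((Real.hasDerivAt_rpow_const (p := -δ) (Or.inl hy0)).const_mul A).add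
      (Real.hasDerivAt_rpow_const (p := ρ) (Or.inl hy0))
  obtain ⟨ia, ha⟩ := kernel (s := -δ) hα₁ hα₂ (by linarith) hy
  obtain ⟨ib, hb⟩ := kernel (s := ρ) hα₁ hα₂ (by linarith) hy
  have hsplit : ∫ z in Ioi (0:ℝ), (A * (y + z) ^ (-δ) + (y + z) ^ ρ - (A * y ^ (-δ) + y ^ ρ)
        - deriv (fun y' : ℝ => A * y' ^ (-δ) + y' ^ ρ) y * z) * (c * z ^ (-1 - α₂))
      = (c*A) * (∫ z in Ioi (0:ℝ), ((y+z)^(-δ) - y^(-δ) - (-δ)*y^(-δ-1)*z) * z^(-1-α₂))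
        + c * (∫ z in Ioi (0:ℝ), ((y+z)^ρ - y^ρ - ρ*y^(ρ-1)*z) * z^(-1-α₂)) := by
    have hcong : ∫ z in Ioi (0:ℝ), (A * (y + z) ^ (-δ) + (y + z) ^ ρ - (A * y ^ (-δ) + y ^ ρ)
          - deriv (fun y' : ℝ => A * y' ^ (-δ) + y' ^ ρ) y * z) * (c * z ^ (-1 - α₂))
        = ∫ z in Ioi (0:ℝ), ((c*A) * (((y+z)^(-δ) - y^(-δ) - (-δ)*y^(-δ-1)*z) * z^(-1-α₂))
            + c * (((y+z)^ρ - y^ρ - ρ*y^(ρ-1)*z) * z^(-1-α₂))) := by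
      refine setIntegral_congr_fun measurableSet_Ioi fun z hz => ?_
      rw [hD]
      ring
    rw [hcong, integral_add (ia.const_mul (c*A)) (ib.const_mul c),
      integral_const_mul, integral_const_mul]
  rw [show α₂ - -δ = α₂ + δ by ring, show 2 - -δ = δ + 2 by ring] at ha
  rw [hsplit, ha, hb, hc]
  have hg1 : Gamma α₂ ≠ 0 := (Real.Gamma_pos_of_pos (by linarith)).ne'
  have hg2 : Gamma (2 - α₂) ≠ 0 := (Real.Gamma_pos_of_pos (by linarith)).ne'
  have hg3 : Gamma (δ + 2) ≠ 0 := (Real.Gamma_pos_of_pos (by linarith)).ne'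
  have hg4 : Gamma (2 - ρ) ≠ 0 := (Real.Gamma_pos_of_pos (by linarith)).ne'
  have h5 : α₂ ≠ 0 := by linarith
  have h6 : α₂ - 1 ≠ 0 := by intro h; linarith [sub_eq_zero.mp h]
  field_simp
  ring
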